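/- For α ≥ n and positive semidefinite n×n matrices A, B with nonnegative entries, the entrywise power is super-additive: (A+B)^{∘α} ≥ A^{∘α} + B^{∘α} in the Loewner order. -/

import Mathlib

/-- The power function `x ↦ x^a` on `[0,∞)`, with the convention `0^a := 0`. -/
noncomputable def pow0 (a x : ℝ) : ℝ := if x = 0 then 0 else x ^ a


open Matrix MeasureTheory

namespace Stmt17

variable {m : ℕ}

/-- Quadratic form as a double sum. -/
def S (M : Matrix (Fin m) (Fin m) ℝ) (x : Fin m → ℝ) : ℝ :=
  ∑ i, ∑ j, x i * x j * M i j

lemma qf_eq (M : Matrix (Fin m) (Fin m) ℝ) (x : Fin m → ℝ) :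
    x ⬝ᵥ M *ᵥ x = S M x := by
  simp only [S, dotProduct, mulVec, Finset.mul_sum]
  exact Finset.sum_congr rfl fun i _ => Finset.sum_congr rfl fun j _ => by ring

lemma S_nonneg {M : Matrix (Fin m) (Fin m) ℝ} (hM : M.PosSemidef) (x : Fin m → ℝ) :
    0 ≤ S M x := by
  have h := hM.dotProduct_mulVec_nonneg x
  rwa [star_trivial, qf_eq] at h

lemma posSemidef_of_S {M : Matrix (Fin m) (Fin m) ℝ} (h1 : M.IsHermitian)
    (h2 : ∀ x, 0 ≤ S M x) : M.PosSemidef := by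
  refine Matrix.PosSemidef.of_dotProduct_mulVec_nonneg h1 fun x => ?_
  rw [star_trivial, qf_eq]
  exact h2 x

lemma herm_of (M : Matrix (Fin m) (Fin m) ℝ) (h : ∀ i j, M j i = M i j) :
    M.IsHermitian := by
  ext i j
  simp [Matrix.conjTranspose_apply, h]

lemma herm_apply {M : Matrix (Fin m) (Fin m) ℝ} (h : M.IsHermitian) (i j : Fin m) :
    M j i = M i j := by
  conv_rhs => rw [← h]
  simp [Matrix.conjTranspose_apply]

lemma herm_map {M : Matrix (Fin m) (Fin m) ℝ} (h : M.IsHermitian) (f : ℝ → ℝ) :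
    (M.map f).IsHermitian :=
  herm_of _ fun i j => by simp [Matrix.map_apply, herm_apply h i j]

lemma S_sub (M N : Matrix (Fin m) (Fin m) ℝ) (x : Fin m → ℝ) :
    S (M - N) x = S M x - S N x := by
  simp [S, Finset.sum_sub_distrib, mul_sub]







lemma qf_symm {M : Matrix (Fin m) (Fin m) ℝ} (hM : M.IsHermitian) (u v : Fin m → ℝ) :
    u ⬝ᵥ M *ᵥ v = v ⬝ᵥ M *ᵥ u := by
  have ht : Mᵀ = M := by
    ext i j
    exact herm_apply hM i j
  rw [Matrix.dotProduct_mulVec, ← Matrix.mulVec_transpose, ht, dotProduct_comm]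

lemma cauchy {M : Matrix (Fin m) (Fin m) ℝ} (hM : M.PosSemidef) (x y : Fin m → ℝ) :
    (x ⬝ᵥ M *ᵥ y) ^ 2 ≤ (x ⬝ᵥ M *ᵥ x) * (y ⬝ᵥ M *ᵥ y) := by
  have key : ∀ t : ℝ, 0 ≤ (y ⬝ᵥ M *ᵥ y) * (t * t) + (2 * (x ⬝ᵥ M *ᵥ y)) * t + x ⬝ᵥ M *ᵥ x := by
    intro t
    have h := hM.dotProduct_mulVec_nonneg (x + t • y)
    rw [star_trivial] at h
    have hexp : (x + t • y) ⬝ᵥ M *ᵥ (x + t • y) =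
        (y ⬝ᵥ M *ᵥ y) * (t * t) + (2 * (x ⬝ᵥ M *ᵥ y)) * t + x ⬝ᵥ M *ᵥ x := by
      rw [Matrix.mulVec_add, Matrix.mulVec_smul]
      rw [add_dotProduct, smul_dotProduct]
      simp only [dotProduct_add, dotProduct_smul, smul_eq_mul]
      have hs := qf_symm hM.isHermitian x y
      rw [qf_symm hM.isHermitian y x]
      ring
    rw [hexp] at h
    exact h
  have hd := discrim_le_zero key
  rw [discrim] at hd
  nlinarith [hd]

/-- Schur product theorem, quadratic-form version. -/
lemma schur_S {A B : Matrix (Fin m) (Fin m) ℝ} (hA : A.PosSemidef) (hB : B.PosSemidef)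
    (x : Fin m → ℝ) : 0 ≤ ∑ i, ∑ j, x i * x j * (A i j * B i j) := by
  obtain ⟨C, hC⟩ : ∃ C : Matrix (Fin m) (Fin m) ℝ, B = Cᴴ * C := by
    open scoped MatrixOrder in exact CStarAlgebra.nonneg_iff_eq_star_mul_self.mp hB.nonneg
  have hBrep : ∀ i j, B i j = ∑ k, C k i * C k j := by
    intro i j
    rw [hC]
    simp [Matrix.mul_apply, Matrix.conjTranspose_apply]
  calc ∑ i, ∑ j, x i * x j * (A i j * B i j)
      = ∑ i, ∑ j, ∑ k, (x i * C k i) * ((x j * C k j) * A i j) := by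
        refine Finset.sum_congr rfl fun i _ => Finset.sum_congr rfl fun j _ => ?_
        rw [hBrep i j, Finset.mul_sum, Finset.mul_sum]
        exact Finset.sum_congr rfl fun k _ => by ring
    _ = ∑ i, ∑ k, ∑ j, (x i * C k i) * ((x j * C k j) * A i j) :=
        Finset.sum_congr rfl fun i _ => Finset.sum_comm
    _ = ∑ k, ∑ i, ∑ j, (x i * C k i) * ((x j * C k j) * A i j) := Finset.sum_comm
    _ = ∑ k, S A (fun i => x i * C k i) := by
        refine Finset.sum_congr rfl fun k _ => ?_
        simp only [S]
        exact Finset.sum_congr rfl fun i _ => Finset.sum_congr rfl fun j _ => by ring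
    _ ≥ 0 := Finset.sum_nonneg fun k _ => S_nonneg hA _





lemma cont_rpow {β : ℝ} (hβ : 0 ≤ β) : Continuous fun x : ℝ => x ^ β :=
  continuous_iff_continuousAt.2 fun x => Real.continuousAt_rpow_const x _ (Or.inr hβ)

lemma scalar_id {γ : ℝ} (hγ : 1 ≤ γ) (a b : ℝ) :
    a ^ γ - b ^ γ = ∫ t in (0:ℝ)..1, (a - b) * γ * (b + t * (a - b)) ^ (γ - 1) := by
  have hc : Continuous fun t : ℝ => (a - b) * γ * (b + t * (a - b)) ^ (γ - 1) := by
    have h1 : Continuous fun t : ℝ => b + t * (a - b) :=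
      continuous_const.add (continuous_id.mul continuous_const)
    exact continuous_const.mul ((cont_rpow (by linarith)).comp h1)
  have key := intervalIntegral.integral_eq_sub_of_hasDerivAt
    (f := fun t : ℝ => (b + t * (a - b)) ^ γ)
    (f' := fun t : ℝ => (a - b) * γ * (b + t * (a - b)) ^ (γ - 1))
    (a := 0) (b := 1)
    (fun t _ => by
      have hg : HasDerivAt (fun t : ℝ => b + t * (a - b)) (a - b) t :=
        (hasDerivAt_mul_const (a - b)).const_add b
      exact hg.rpow_const (Or.inr hγ))
    (hc.intervalIntegrable 0 1)
  rw [key]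
  norm_num



/-- The integral representation of the difference of entrywise powers, at the level of
quadratic forms. -/
lemma S_rep {γ : ℝ} (hγ : 1 ≤ γ) (M N : Matrix (Fin m) (Fin m) ℝ) (x : Fin m → ℝ) :
    S (M.map (· ^ γ)) x - S (N.map (· ^ γ)) x =
      ∫ t in (0:ℝ)..1, ∑ i, ∑ j,
        x i * x j * ((M i j - N i j) * γ * (N i j + t * (M i j - N i j)) ^ (γ - 1)) := by
  set g : Fin m → Fin m → ℝ → ℝ := fun i j t =>
    x i * x j * ((M i j - N i j) * γ * (N i j + t * (M i j - N i j)) ^ (γ - 1)) with hg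
  have hcont : ∀ (i j : Fin m), Continuous (g i j) := by
    intro i j
    have h1 : Continuous fun t : ℝ => N i j + t * (M i j - N i j) :=
      continuous_const.add (continuous_id.mul continuous_const)
    exact continuous_const.mul (continuous_const.mul ((cont_rpow (by linarith)).comp h1))
  have e1 : (∫ t in (0:ℝ)..1, ∑ i, ∑ j, g i j t) = ∑ i, ∑ j, ∫ t in (0:ℝ)..1, g i j t := by
    have e1a : (∫ t in (0:ℝ)..1, ∑ i, ∑ j, g i j t)
        = ∑ i, ∫ t in (0:ℝ)..1, ∑ j, g i j t :=
      intervalIntegral.integral_finset_sum (fun i _ =>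
        (continuous_finset_sum Finset.univ fun j _ => hcont i j).intervalIntegrable 0 1)
    rw [e1a]
    exact Finset.sum_congr rfl fun i _ =>
      intervalIntegral.integral_finset_sum (fun j _ => (hcont i j).intervalIntegrable 0 1)
  rw [e1]
  simp only [S, ← Finset.sum_sub_distrib, Matrix.map_apply, hg]
  refine Finset.sum_congr rfl fun i _ => Finset.sum_congr rfl fun j _ => ?_
  have hs := scalar_id hγ (M i j) (N i j)
  calc x i * x j * M i j ^ γ - x i * x j * N i j ^ γ
      = x i * x j * (M i j ^ γ - N i j ^ γ) := by ring
    _ = x i * x j * ∫ t in (0:ℝ)..1,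
          (M i j - N i j) * γ * (N i j + t * (M i j - N i j)) ^ (γ - 1) := by rw [hs]
    _ = ∫ t in (0:ℝ)..1,
          x i * x j * ((M i j - N i j) * γ * (N i j + t * (M i j - N i j)) ^ (γ - 1)) :=
        (intervalIntegral.integral_const_mul _ _).symm



lemma psd_smul {M : Matrix (Fin m) (Fin m) ℝ} (hM : M.PosSemidef) {t : ℝ} (ht : 0 ≤ t) :
    (t • M).PosSemidef := by
  refine posSemidef_of_S (herm_of _ fun i j => ?_) fun x => ?_
  · simp [Matrix.smul_apply, herm_apply hM.isHermitian i j]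
  · have hexp : S (t • M) x = t * S M x := by
      simp only [S, Matrix.smul_apply, smul_eq_mul, Finset.mul_sum]
      exact Finset.sum_congr rfl fun i _ => Finset.sum_congr rfl fun j _ => by ring
    rw [hexp]
    exact mul_nonneg ht (S_nonneg hM x)

lemma S_castSucc {m : ℕ} (f : Fin (m + 1) → Fin (m + 1) → ℝ)
    (h : ∀ j, f (Fin.last m) j = 0) (h' : ∀ i, f i (Fin.last m) = 0) :
    ∑ i, ∑ j, f i j = ∑ i : Fin m, ∑ j : Fin m, f i.castSucc j.castSucc := by
  rw [Fin.sum_univ_castSucc (f := fun i => ∑ j, f i j)]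
  simp only [h, Finset.sum_const_zero, add_zero]
  refine Finset.sum_congr rfl fun i _ => ?_
  rw [Fin.sum_univ_castSucc (f := fun j => f i.castSucc j)]
  simp [h']

lemma entry_sq_le {M : Matrix (Fin m) (Fin m) ℝ} (hM : M.PosSemidef) (i j : Fin m) :
    (M i j) ^ 2 ≤ M i i * M j j := by
  have hc := cauchy hM (Pi.single i 1) (Pi.single j 1)
  simpa [Matrix.mulVec_single, dotProduct, Pi.single_apply] using hc

lemma zero_diag {M : Matrix (Fin m) (Fin m) ℝ} (hM : M.PosSemidef) {l : Fin m}
    (h : M l l = 0) (i : Fin m) : M i l = 0 := by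
  have h1 := entry_sq_le hM i l
  rw [h, mul_zero] at h1
  exact pow_eq_zero_iff (two_ne_zero) |>.mp (le_antisymm h1 (sq_nonneg _))

lemma single_qf (M : Matrix (Fin m) (Fin m) ℝ) (x : Fin m → ℝ) (l : Fin m) :
    x ⬝ᵥ M *ᵥ (Pi.single l 1) = ∑ i, x i * M i l := by
  simp [Matrix.mulVec_single, dotProduct]

lemma psd1 {M : Matrix (Fin 1) (Fin 1) ℝ} (h : 0 ≤ M 0 0) : M.PosSemidef := by
  refine posSemidef_of_S (herm_of _ fun i j => by fin_cases i <;> fin_cases j <;> rfl)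
    fun x => ?_
  simp only [S, Fin.sum_univ_one]
  nlinarith [mul_self_nonneg (x 0), h]

lemma psd2 {M : Matrix (Fin 2) (Fin 2) ℝ} (h01 : M 1 0 = M 0 1) (h00 : 0 ≤ M 0 0)
    (h11 : 0 ≤ M 1 1) (h01n : 0 ≤ M 0 1) (hdet : M 0 1 * M 0 1 ≤ M 0 0 * M 1 1) :
    M.PosSemidef := by
  refine posSemidef_of_S (herm_of _ fun i j => by fin_cases i <;> fin_cases j <;>
    simp [h01]) fun x => ?_
  simp only [S, Fin.sum_univ_two, h01]
  rcases eq_or_lt_of_le h00 with hpz | hppos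
  · have hqz : M 0 1 = 0 := by nlinarith
    rw [hqz, ← hpz]
    nlinarith [mul_self_nonneg (x 1)]
  · nlinarith [sq_nonneg (M 0 0 * x 0 + M 0 1 * x 1),
      mul_nonneg (sub_nonneg.2 hdet) (sq_nonneg (x 1)),
      mul_self_nonneg (x 0), mul_self_nonneg (x 1)]

/-- FitzGerald–Horn: for `γ ≥ m - 2`, entrywise powers preserve doubly nonnegative matrices. -/
lemma FH : ∀ (m : ℕ) (γ : ℝ), 0 ≤ γ → (m : ℝ) - 2 ≤ γ →
    ∀ A : Matrix (Fin m) (Fin m) ℝ, A.PosSemidef → (∀ i j, 0 ≤ A i j) →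
    (A.map (· ^ γ)).PosSemidef := by
  intro m
  induction m with
  | zero =>
    intro γ _ _ A hA _
    exact posSemidef_of_S (herm_map hA.isHermitian _) fun x => by simp [S]
  | succ m ih =>
    intro γ hγ0 hγm A hA hAe
    have hherm := herm_map hA.isHermitian (· ^ γ)
    rcases eq_or_lt_of_le hγ0 with hγz | hγpos
    · -- γ = 0 : all entries become 1
      refine posSemidef_of_S hherm fun x => ?_
      have h1 : ∀ i j, (A.map (· ^ γ)) i j = 1 := fun i j => by
        simp [Matrix.map_apply, ← hγz, Real.rpow_zero]
      have h2 : S (A.map (· ^ γ)) x = (∑ i, x i) * (∑ j, x j) := by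
        rw [Finset.sum_mul_sum]
        simp only [S, h1, mul_one]
      rw [h2]
      exact mul_self_nonneg _
    · rcases Nat.lt_or_ge m 2 with hm | hm
      · interval_cases m
        · -- size 1
          exact psd1 (Real.rpow_nonneg (hAe 0 0) γ)
        · -- size 2
          have hsym : A 1 0 = A 0 1 := herm_apply hA.isHermitian 0 1
          have hq : (A 0 1) ^ γ * (A 0 1) ^ γ ≤ (A 0 0) ^ γ * (A 1 1) ^ γ := by
            have h1 : (A 0 1 * A 0 1) ^ γ ≤ (A 0 0 * A 1 1) ^ γ := by
              refine Real.rpow_le_rpow (mul_self_nonneg _) ?_ hγ0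
              nlinarith [entry_sq_le hA 0 1]
            rwa [Real.mul_rpow (hAe 0 1) (hAe 0 1), Real.mul_rpow (hAe 0 0) (hAe 1 1)] at h1
          refine psd2 ?_ (Real.rpow_nonneg (hAe 0 0) γ) (Real.rpow_nonneg (hAe 1 1) γ)
            (Real.rpow_nonneg (hAe 0 1) γ) hq
          show (A 1 0) ^ γ = (A 0 1) ^ γ
          rw [hsym]
      · -- size m + 1 ≥ 3
        have hm' : (2 : ℝ) ≤ m := by exact_mod_cast hm
        have hγm' : (m : ℝ) - 1 ≤ γ := by push_cast at hγm; linarith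
        have hγ1 : 1 ≤ γ := by linarith
        set l := Fin.last m with hl
        by_cases ha : A l l = 0
        · -- last row and column vanish
          have hcol : ∀ i, A i l = 0 := zero_diag hA ha
          have hrow : ∀ j, A l j = 0 := fun j => by
            rw [herm_apply hA.isHermitian j l]; exact hcol j
          refine posSemidef_of_S hherm fun x => ?_
          have hz : ∀ j, (A.map (· ^ γ)) l j = 0 := fun j => by
            simp [Matrix.map_apply, hrow j, Real.zero_rpow (ne_of_gt hγpos)]
          have hz' : ∀ i, (A.map (· ^ γ)) i l = 0 := fun i => by
            simp [Matrix.map_apply, hcol i, Real.zero_rpow (ne_of_gt hγpos)]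
          have hsub := ih γ hγ0 (by push_cast at hγm ⊢; linarith)
            (A.submatrix Fin.castSucc Fin.castSucc) (hA.submatrix _)
            (fun i j => hAe _ _)
          have hred : S (A.map (· ^ γ)) x =
              S ((A.submatrix Fin.castSucc Fin.castSucc).map (· ^ γ)) (x ∘ Fin.castSucc) := by
            rw [S, S_castSucc (fun i j => x i * x j * (A.map (· ^ γ)) i j)
              (fun j => by
                show x (Fin.last m) * x j * (A.map (· ^ γ)) (Fin.last m) j = 0
                rw [hz j, mul_zero])
              (fun i => by
                show x i * x (Fin.last m) * (A.map (· ^ γ)) i (Fin.last m) = 0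
                rw [hz' i, mul_zero])]
            rfl
          rw [hred]
          exact S_nonneg hsub _
        · -- main rank-one reduction
          have hapos : 0 < A l l := lt_of_le_of_ne (hAe l l) (Ne.symm ha)
          set sa := Real.sqrt (A l l) with hsa_def
          have hsa : 0 < sa := Real.sqrt_pos.2 hapos
          have hsa2 : sa * sa = A l l := Real.mul_self_sqrt hapos.le
          set ξ : Fin (m + 1) → ℝ := fun i => A i l / sa with hξdef
          set B : Matrix (Fin (m + 1)) (Fin (m + 1)) ℝ := Matrix.of fun i j => ξ i * ξ j
            with hBdef
          have hξ : ∀ i, 0 ≤ ξ i := fun i => div_nonneg (hAe i l) hsa.le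
          have hBapp : ∀ i j, B i j = ξ i * ξ j := fun i j => rfl
          have hBsymm : B.IsHermitian := herm_of _ fun i j => by rw [hBapp, hBapp]; ring
          have hBe : ∀ i j, 0 ≤ B i j := fun i j => mul_nonneg (hξ i) (hξ j)
          have hBl : ∀ i, B i l = A i l := by
            intro i
            rw [hBapp]
            have hxl : ξ l = sa := by
              show A l l / sa = sa
              rw [hsa_def]
              exact Real.div_sqrt
            rw [hxl]
            show A i l / sa * sa = A i l
            exact div_mul_cancel₀ _ (ne_of_gt hsa)
          have hBl' : ∀ j, B l j = A l j := fun j => by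
            rw [hBapp, mul_comm, ← hBapp, hBl, herm_apply hA.isHermitian j l]
          have hSB : ∀ x : Fin (m + 1) → ℝ, S B x = (∑ i, x i * ξ i) ^ 2 := by
            intro x
            rw [sq, Finset.sum_mul_sum]
            exact Finset.sum_congr rfl fun i _ => Finset.sum_congr rfl fun j _ => by
              rw [hBapp]; ring
          have hBpsd : B.PosSemidef := posSemidef_of_S hBsymm fun x => by
            rw [hSB]; exact sq_nonneg _
          have hABpsd : (A - B).PosSemidef := by
            refine posSemidef_of_S (hA.isHermitian.sub hBsymm) fun x => ?_
            rw [S_sub]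
            have hc := cauchy hA x (Pi.single l 1)
            rw [single_qf] at hc
            have h2 : (Pi.single l 1 : Fin (m + 1) → ℝ) ⬝ᵥ A *ᵥ (Pi.single l 1) = A l l := by
              simp [Matrix.mulVec_single, dotProduct, Pi.single_apply]
            rw [h2, qf_eq] at hc
            have h3 : S B x = (∑ i, x i * A i l) ^ 2 / A l l := by
              rw [hSB]
              have h4 : ∑ i, x i * ξ i = (∑ i, x i * A i l) / sa := by
                rw [Finset.sum_div]
                exact Finset.sum_congr rfl fun i _ => by rw [hξdef]; ring
              rw [h4, div_pow, show sa ^ 2 = A l l from by rw [sq, hsa2]]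
            rw [h3, sub_nonneg, div_le_iff₀ hapos]
            exact hc
          have hABl : ∀ j, (A - B) l j = 0 := fun j => by
            rw [Matrix.sub_apply, hBl' j, sub_self]
          have hABl' : ∀ i, (A - B) i l = 0 := fun i => by
            rw [Matrix.sub_apply, hBl i, sub_self]
          -- B.map is PSD (rank one with nonneg vector)
          have hBmap : ∀ x : Fin (m + 1) → ℝ, 0 ≤ S (B.map (· ^ γ)) x := by
            intro x
            have h5 : S (B.map (· ^ γ)) x = (∑ i, x i * (ξ i) ^ γ) ^ 2 := by
              rw [sq, Finset.sum_mul_sum]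
              refine Finset.sum_congr rfl fun i _ => Finset.sum_congr rfl fun j _ => ?_
              rw [Matrix.map_apply, hBapp, Real.mul_rpow (hξ i) (hξ j)]
              ring
            rw [h5]; exact sq_nonneg _
          refine posSemidef_of_S hherm fun x => ?_
          have hrep := S_rep hγ1 A B x
          have hint : 0 ≤ ∫ t in (0:ℝ)..1, ∑ i, ∑ j,
              x i * x j * ((A i j - B i j) * γ * (B i j + t * (A i j - B i j)) ^ (γ - 1)) := by
            refine intervalIntegral.integral_nonneg (by norm_num) fun t ht => ?_
            set C : Matrix (Fin (m + 1)) (Fin (m + 1)) ℝ := B + t • (A - B) with hCdef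
            have hCapp : ∀ i j, C i j = B i j + t * (A i j - B i j) := fun i j => by
              simp [hCdef, Matrix.add_apply, Matrix.smul_apply, Matrix.sub_apply, smul_eq_mul]
            have hCpsd : C.PosSemidef := hBpsd.add (psd_smul hABpsd ht.1)
            have hCe : ∀ i j, 0 ≤ C i j := by
              intro i j
              rw [hCapp]
              nlinarith [hBe i j, hAe i j, ht.1, ht.2]
            have hDsub := ih (γ - 1) (by linarith) (by push_cast; linarith)
              (C.submatrix Fin.castSucc Fin.castSucc) (hCpsd.submatrix _)
              (fun i j => hCe _ _)
            have hEsub := hABpsd.submatrix (Fin.castSucc (n := m))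
            have hschur := schur_S hEsub hDsub (x ∘ Fin.castSucc)
            have hzr : ∀ j, x (Fin.last m) * x j *
                ((A (Fin.last m) j - B (Fin.last m) j) * γ *
                  (B (Fin.last m) j + t * (A (Fin.last m) j - B (Fin.last m) j)) ^ (γ - 1))
                  = 0 := fun j => by
              have := hABl j
              rw [Matrix.sub_apply] at this
              rw [this]; ring
            have hzc : ∀ i, x i * x (Fin.last m) *
                ((A i (Fin.last m) - B i (Fin.last m)) * γ *
                  (B i (Fin.last m) + t * (A i (Fin.last m) - B i (Fin.last m))) ^ (γ - 1))
                  = 0 := fun i => by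
              have := hABl' i
              rw [Matrix.sub_apply] at this
              rw [this]; ring
            rw [S_castSucc _ hzr hzc]
            calc (0:ℝ) ≤ γ * ∑ i : Fin m, ∑ j : Fin m, (x ∘ Fin.castSucc) i * (x ∘ Fin.castSucc) j *
                  (((A - B).submatrix Fin.castSucc Fin.castSucc) i j *
                    (((C.submatrix Fin.castSucc Fin.castSucc).map (· ^ (γ - 1))) i j)) :=
                mul_nonneg hγ0 hschur
              _ = ∑ i : Fin m, ∑ j : Fin m, x i.castSucc * x j.castSucc *
                  ((A i.castSucc j.castSucc - B i.castSucc j.castSucc) * γ *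
                    (B i.castSucc j.castSucc + t * (A i.castSucc j.castSucc -
                      B i.castSucc j.castSucc)) ^ (γ - 1)) := by
                rw [Finset.mul_sum]
                refine Finset.sum_congr rfl fun i _ => ?_
                rw [Finset.mul_sum]
                refine Finset.sum_congr rfl fun j _ => ?_
                simp only [Matrix.submatrix_apply, Matrix.map_apply, Matrix.sub_apply,
                  Function.comp_apply, hCapp]
                ring
          have hfin : S (A.map (· ^ γ)) x = S (B.map (· ^ γ)) x +
              (S (A.map (· ^ γ)) x - S (B.map (· ^ γ)) x) := by ring
          rw [hfin, hrep]
          exact add_nonneg (hBmap x) hint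

lemma rep_integrable {γ : ℝ} (hγ : 1 ≤ γ) (M N : Matrix (Fin m) (Fin m) ℝ) (x : Fin m → ℝ) :
    IntervalIntegrable (fun t => ∑ i, ∑ j,
      x i * x j * ((M i j - N i j) * γ * (N i j + t * (M i j - N i j)) ^ (γ - 1)))
      MeasureTheory.volume 0 1 := by
  refine (continuous_finset_sum _ fun i _ => continuous_finset_sum _ fun j _ => ?_).intervalIntegrable 0 1
  have h1 : Continuous fun t : ℝ => N i j + t * (M i j - N i j) :=
    continuous_const.add (continuous_id.mul continuous_const)
  exact continuous_const.mul (continuous_const.mul ((cont_rpow (by linarith)).comp h1))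

/-- FitzGerald–Horn monotonicity of entrywise powers. -/
lemma mono {m : ℕ} {β : ℝ} (hβ1 : 1 ≤ β) (hβm : (m : ℝ) - 1 ≤ β)
    {X Y : Matrix (Fin m) (Fin m) ℝ} (hY : Y.PosSemidef) (hXY : (X - Y).PosSemidef)
    (hXe : ∀ i j, 0 ≤ X i j) (hYe : ∀ i j, 0 ≤ Y i j) :
    (X.map (· ^ β) - Y.map (· ^ β)).PosSemidef := by
  have hXpsd : X.PosSemidef := by
    have h := hXY.add hY
    rwa [sub_add_cancel] at h
  refine posSemidef_of_S ((herm_map hXpsd.isHermitian _).sub (herm_map hY.isHermitian _))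
    fun x => ?_
  rw [S_sub, S_rep hβ1]
  refine intervalIntegral.integral_nonneg (by norm_num) fun t ht => ?_
  set C : Matrix (Fin m) (Fin m) ℝ := Y + t • (X - Y) with hCdef
  have hCapp : ∀ i j, C i j = Y i j + t * (X i j - Y i j) := fun i j => by
    simp [hCdef, Matrix.add_apply, Matrix.smul_apply, Matrix.sub_apply, smul_eq_mul]
  have hCpsd : C.PosSemidef := hY.add (psd_smul hXY ht.1)
  have hCe : ∀ i j, 0 ≤ C i j := fun i j => by
    rw [hCapp]
    nlinarith [hYe i j, hXe i j, ht.1, ht.2]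
  have hD := FH m (β - 1) (by linarith) (by linarith) C hCpsd hCe
  have hs := schur_S hXY hD x
  calc (0:ℝ) ≤ β * ∑ i, ∑ j, x i * x j * ((X - Y) i j * ((C.map (· ^ (β - 1))) i j)) :=
        mul_nonneg (by linarith) hs
    _ = ∑ i, ∑ j, x i * x j * ((X i j - Y i j) * β * (Y i j + t * (X i j - Y i j)) ^ (β - 1)) := by
        rw [Finset.mul_sum]
        refine Finset.sum_congr rfl fun i _ => ?_
        rw [Finset.mul_sum]
        refine Finset.sum_congr rfl fun j _ => ?_
        simp only [Matrix.sub_apply, Matrix.map_apply, hCapp]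
        ring

lemma pow0_eq {α : ℝ} (hα : α ≠ 0) : pow0 α = fun x : ℝ => x ^ α := by
  funext x
  unfold pow0
  split_ifs with h
  · rw [h, Real.zero_rpow hα]
  · rfl

lemma real_superadd {a b α : ℝ} (ha : 0 ≤ a) (hb : 0 ≤ b) (hα : 1 ≤ α) :
    a ^ α + b ^ α ≤ (a + b) ^ α := by
  have h := NNReal.add_rpow_le_rpow_add a.toNNReal b.toNNReal hα
  have h2 := NNReal.coe_le_coe.2 h
  push_cast [NNReal.coe_rpow, Real.coe_toNNReal a ha, Real.coe_toNNReal b hb] at h2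
  convert h2 using 2

end Stmt17


/-- For `α ≥ n` and PSD `n×n` matrices `A, B` with nonnegative entries, the entrywise
power is super-additive: `(A+B)^{∘α} ≥ A^{∘α} + B^{∘α}`. -/
theorem stmt17 (n : ℕ) (α : ℝ) (hα : (n : ℝ) ≤ α)
    (A B : Matrix (Fin n) (Fin n) ℝ) (hA : A.PosSemidef) (hB : B.PosSemidef)
    (hAe : ∀ i j, 0 ≤ A i j) (hBe : ∀ i j, 0 ≤ B i j) :
    ((A + B).map (pow0 α) - A.map (pow0 α) - B.map (pow0 α)).PosSemidef := by
  rcases Nat.eq_zero_or_pos n with h0 | hn1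
  · subst h0
    exact Stmt17.posSemidef_of_S (Stmt17.herm_of _ fun i j => i.elim0) fun x => by
      simp [Stmt17.S]
  have hα1 : (1:ℝ) ≤ α := le_trans (by exact_mod_cast hn1) hα
  have hα0 : α ≠ 0 := by linarith
  rw [Stmt17.pow0_eq hα0]
  have hherm : ((A + B).map (· ^ α) - A.map (· ^ α) - B.map (· ^ α)).IsHermitian :=
    ((Stmt17.herm_map (hA.isHermitian.add hB.isHermitian) _).sub
      (Stmt17.herm_map hA.isHermitian _)).sub (Stmt17.herm_map hB.isHermitian _)
  rcases Nat.lt_or_ge n 2 with hn2 | hn2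
  · -- n = 1
    have hn : n = 1 := by omega
    subst hn
    refine Stmt17.posSemidef_of_S hherm fun x => ?_
    simp only [Stmt17.S, Fin.sum_univ_one, Matrix.sub_apply, Matrix.map_apply,
      Matrix.add_apply]
    have hkey := Stmt17.real_superadd (hAe 0 0) (hBe 0 0) hα1
    nlinarith [mul_self_nonneg (x 0), hkey]
  · -- n ≥ 2
    have hn2' : (2:ℝ) ≤ n := by exact_mod_cast hn2
    refine Stmt17.posSemidef_of_S hherm fun x => ?_
    rw [Stmt17.S_sub, Stmt17.S_sub]
    have hrep1 := Stmt17.S_rep hα1 (A + B) B x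
    have hrep2 := Stmt17.S_rep hα1 A 0 x
    have h0map : Stmt17.S ((0 : Matrix (Fin n) (Fin n) ℝ).map (· ^ α)) x = 0 := by
      simp [Stmt17.S, Matrix.map_apply, Real.zero_rpow hα0]
    rw [h0map, sub_zero] at hrep2
    have hgoal : Stmt17.S ((A + B).map (· ^ α)) x - Stmt17.S (A.map (· ^ α)) x -
        Stmt17.S (B.map (· ^ α)) x
        = (Stmt17.S ((A + B).map (· ^ α)) x - Stmt17.S (B.map (· ^ α)) x) -
          Stmt17.S (A.map (· ^ α)) x := by ring
    rw [hgoal, hrep1, hrep2, ← intervalIntegral.integral_sub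
      (Stmt17.rep_integrable hα1 _ _ x) (Stmt17.rep_integrable hα1 _ _ x)]
    refine intervalIntegral.integral_nonneg (by norm_num) fun t ht => ?_
    set X : Matrix (Fin n) (Fin n) ℝ := B + t • A with hXdef
    set Y : Matrix (Fin n) (Fin n) ℝ := t • A with hYdef
    have hXY : X - Y = B := by
      ext i j
      simp [hXdef, hYdef, Matrix.add_apply, Matrix.smul_apply, Matrix.sub_apply]
    have hYpsd : Y.PosSemidef := Stmt17.psd_smul hA ht.1
    have hXYpsd : (X - Y).PosSemidef := by rw [hXY]; exact hB
    have hXe : ∀ i j, 0 ≤ X i j := fun i j => by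
      have : X i j = B i j + t * A i j := by
        simp [hXdef, hYdef, Matrix.add_apply, Matrix.smul_apply, smul_eq_mul]
      rw [this]
      exact add_nonneg (hBe i j) (mul_nonneg ht.1 (hAe i j))
    have hYe : ∀ i j, 0 ≤ Y i j := fun i j => by
      have : Y i j = t * A i j := by simp [hYdef, Matrix.smul_apply, smul_eq_mul]
      rw [this]
      exact mul_nonneg ht.1 (hAe i j)
    have hmono := Stmt17.mono (β := α - 1) (by linarith) (by linarith)
      hYpsd hXYpsd hXe hYe
    have hs := Stmt17.schur_S hA hmono x
    calc (0:ℝ) ≤ α * ∑ i, ∑ j, x i * x j *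
          (A i j * ((X.map (· ^ (α - 1)) - Y.map (· ^ (α - 1))) i j)) :=
        mul_nonneg (by linarith) hs
      _ = ∑ i, ∑ j, (x i * x j * (((A + B) i j - B i j) * α *
            (B i j + t * ((A + B) i j - B i j)) ^ (α - 1)) -
          x i * x j * ((A i j - (0 : Matrix (Fin n) (Fin n) ℝ) i j) * α *
            ((0 : Matrix (Fin n) (Fin n) ℝ) i j + t *
              (A i j - (0 : Matrix (Fin n) (Fin n) ℝ) i j)) ^ (α - 1))) := by
        rw [Finset.mul_sum]
        refine Finset.sum_congr rfl fun i _ => ?_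
        rw [Finset.mul_sum]
        refine Finset.sum_congr rfl fun j _ => ?_
        simp only [Matrix.sub_apply, Matrix.map_apply, Matrix.add_apply, Matrix.zero_apply,
          Matrix.smul_apply, smul_eq_mul, hXdef, hYdef, add_sub_cancel_right, sub_zero,
          zero_add]
        ring
      _ = ∑ i, ∑ j, x i * x j * (((A + B) i j - B i j) * α *
            (B i j + t * ((A + B) i j - B i j)) ^ (α - 1)) -
          ∑ i, ∑ j, x i * x j * ((A i j - (0 : Matrix (Fin n) (Fin n) ℝ) i j) * α *
            ((0 : Matrix (Fin n) (Fin n) ℝ) i j + t *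
              (A i j - (0 : Matrix (Fin n) (Fin n) ℝ) i j)) ^ (α - 1)) := by
        rw [← Finset.sum_sub_distrib]
        exact Finset.sum_congr rfl fun i _ => Finset.sum_sub_distrib _ _
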